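/- Let n ≥ 3 and let a_2,...,a_{n−1} be nonnegative integers. Define b_{2,1} = (a_2^2 + a_3^2 + ... + a_{n−1}^2) − (a_2a_3 + a_3a_4 + ... + a_{n−2}a_{n−1}) and b_{2,3} = (a_2a_3 + a_3a_4 + ... + a_{n−2}a_{n−1}) − (a_3^2 + ... + a_{n−1}^2). Suppose b_{2,1} ≥ 0, b_{2,3} ≥ 0, and b_{2,3}·a_2 ≥ b_{2,1}·a_2. Then a_i = 0 for all i with 2 ≤ i ≤ n − 1. -/

import Mathlib

theorem no_nonconstant_map_P3_arithmetic (n : ℕ) (hn : 3 ≤ n) (a : ℕ → ℤ)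
    (ha : ∀ i ∈ Finset.Icc 2 (n - 1), 0 ≤ a i)
    (hb21 : 0 ≤ (∑ i ∈ Finset.Icc 2 (n - 1), a i ^ 2) -
      (∑ i ∈ Finset.Icc 2 (n - 2), a i * a (i + 1)))
    (hb23 : 0 ≤ (∑ i ∈ Finset.Icc 2 (n - 2), a i * a (i + 1)) -
      (∑ i ∈ Finset.Icc 3 (n - 1), a i ^ 2))
    (hc : ((∑ i ∈ Finset.Icc 2 (n - 2), a i * a (i + 1)) -
        (∑ i ∈ Finset.Icc 3 (n - 1), a i ^ 2)) * a 2 ≥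
      ((∑ i ∈ Finset.Icc 2 (n - 1), a i ^ 2) -
        (∑ i ∈ Finset.Icc 2 (n - 2), a i * a (i + 1))) * a 2) :
    ∀ i ∈ Finset.Icc 2 (n - 1), a i = 0 := by
  set m := n - 1 with hm
  have hm2 : 2 ≤ m := by omega
  have hn2 : n - 2 = m - 1 := by omega
  rw [hn2] at hb21 hb23 hc
  set S2 := ∑ i ∈ Finset.Icc 2 m, a i ^ 2 with hS2
  set S3 := ∑ i ∈ Finset.Icc 3 m, a i ^ 2 with hS3
  set P := ∑ i ∈ Finset.Icc 2 (m - 1), a i * a (i + 1) with hP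
  -- reindex: Σ_{3..m} a_i² = Σ_{2..m-1} a_{i+1}²
  have hre : S3 = ∑ i ∈ Finset.Icc 2 (m - 1), a (i + 1) ^ 2 := by
    rw [hS3, show (3 : ℕ) = 2 + 1 from rfl, show m = (m - 1) + 1 by omega,
      ← Finset.map_add_right_Icc, Finset.sum_map]
    rfl
  -- split off top of S2
  have hS2top : S2 = (∑ i ∈ Finset.Icc 2 (m - 1), a i ^ 2) + a m ^ 2 := by
    rw [hS2, show m = (m - 1) + 1 by omega, Finset.sum_Icc_succ_top (by omega)]
    simp
  -- split off bottom of S2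
  have hS2bot : S2 = a 2 ^ 2 + S3 := by
    rw [hS2, hS3, ← Finset.insert_Icc_add_one_left_eq_Icc hm2, Finset.sum_insert (by simp)]; rfl
  -- key identity
  have key : (∑ i ∈ Finset.Icc 2 (m - 1), (a i - a (i + 1)) ^ 2) + a m ^ 2
      = S2 + S3 - 2 * P := by
    have : ∑ i ∈ Finset.Icc 2 (m - 1), (a i - a (i + 1)) ^ 2
        = (∑ i ∈ Finset.Icc 2 (m - 1), a i ^ 2)
          + (∑ i ∈ Finset.Icc 2 (m - 1), a (i + 1) ^ 2) - 2 * P := by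
      rw [hP, Finset.mul_sum, ← Finset.sum_add_distrib, ← Finset.sum_sub_distrib]
      exact Finset.sum_congr rfl fun i _ => by ring
    rw [this, ← hre, hS2top]; ring
  have ha2 : 0 ≤ a 2 := ha 2 (by simp [Finset.mem_Icc]; omega)
  -- D := S2 + S3 - 2P = 0
  have hD : S2 + S3 - 2 * P = 0 := by
    have hDnn : 0 ≤ S2 + S3 - 2 * P := by
      rw [← key]
      have := Finset.sum_nonneg (fun i (_ : i ∈ Finset.Icc 2 (m - 1)) =>
        sq_nonneg (a i - a (i + 1)))
      nlinarith [sq_nonneg (a m)]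
    rcases eq_or_lt_of_le ha2 with h | h
    · nlinarith [hS2bot]
    · have hle : (S2 + S3 - 2 * P) * a 2 ≤ 0 * a 2 := by nlinarith [hc]
      have := le_of_mul_le_mul_right hle h
      linarith
  have hsum0 : (∑ i ∈ Finset.Icc 2 (m - 1), (a i - a (i + 1)) ^ 2) + a m ^ 2 = 0 := by
    rw [key, hD]
  have hsnn : 0 ≤ ∑ i ∈ Finset.Icc 2 (m - 1), (a i - a (i + 1)) ^ 2 :=
    Finset.sum_nonneg fun i _ => sq_nonneg _
  have ham : a m = 0 := by
    have := sq_nonneg (a m); have : a m ^ 2 = 0 := by linarith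
    exact pow_eq_zero_iff (by norm_num) |>.mp this
  have hdiff : ∀ i ∈ Finset.Icc 2 (m - 1), a i = a (i + 1) := by
    have h0 : ∑ i ∈ Finset.Icc 2 (m - 1), (a i - a (i + 1)) ^ 2 = 0 := by
      nlinarith [sq_nonneg (a m)]
    intro i hi
    have := (Finset.sum_eq_zero_iff_of_nonneg fun i _ => sq_nonneg (a i - a (i + 1))).mp h0 i hi
    have := pow_eq_zero_iff (n := 2) (by norm_num) |>.mp this
    linarith
  have hzero : ∀ j, j ≤ m - 2 → a (m - j) = 0 := by
    intro j
    induction j with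
    | zero => intro _; simpa using ham
    | succ k ih =>
      intro hk
      have hmem : m - (k + 1) ∈ Finset.Icc 2 (m - 1) := by
        simp [Finset.mem_Icc]; omega
      have := hdiff _ hmem
      rw [show m - (k + 1) + 1 = m - k by omega] at this
      rw [this]; exact ih (by omega)
  intro i hi
  simp only [Finset.mem_Icc] at hi
  have := hzero (m - i) (by omega)
  rwa [show m - (m - i) = i by omega] at this
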